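/- Assume either (i) a* > 0 and β ≥ β_max, or (ii) a* = 0. Then the unique minimizer of g over D is (0, ĉ), where ĉ ∈ (max(β,a*), ∞) is the unique minimizer of g₀ on (β,∞); in particular, the optimal lower barrier is c₁* = 0. -/

import Mathlib

set_option maxHeartbeats 1000000 in
theorem stmt_14
    (H H' : ℝ → ℝ)
    (hHcont : ContinuousOn H (Set.Ici 0))
    (hHderiv : ∀ x ∈ Set.Ioi (0:ℝ), HasDerivAt H (H' x) x)
    (hH'pos : ∀ x ∈ Set.Ioi (0:ℝ), 0 < H' x)
    (hH'cont : ContinuousOn H' (Set.Ici 0))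
    (hH'top : Filter.Tendsto H' Filter.atTop Filter.atTop)
    (β : ℝ) (hβ : 0 < β)
    (astar : ℝ) (hastar : 0 ≤ astar)
    (hH'dec : StrictAntiOn H' (Set.Ioo 0 astar))
    (hH'inc : StrictMonoOn H' (Set.Ioi astar))
    (hH'conv : ConvexOn ℝ (Set.Ioi 0) H')
    (g₀ : ℝ → ℝ) (hg₀ : ∀ x, g₀ x = (H x - H 0) / (x - β))
    (z₀ βmax : ℝ) (hz₀ : 0 < astar → z₀ ∈ Set.Ioi astar ∧ H' z₀ = H' 0)
    (hβmax : βmax = z₀ - (H z₀ - H 0) / H' 0)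
    (hcase : (0 < astar ∧ βmax ≤ β) ∨ astar = 0)
    :
    ∃ chat : ℝ, max β astar < chat ∧
      (∀ x : ℝ, β < x → x ≠ chat → g₀ chat < g₀ x) ∧
      (0 ≤ (0:ℝ) ∧ 0 + β < chat) ∧
      (∀ d₁ d₂ : ℝ, 0 ≤ d₁ → d₁ + β < d₂ →
        (H chat - H 0) / (chat - 0 - β) ≤ (H d₂ - H d₁) / (d₂ - d₁ - β)) ∧
      (∀ c₁ c₂ : ℝ, 0 ≤ c₁ → c₁ + β < c₂ →
        (∀ d₁ d₂ : ℝ, 0 ≤ d₁ → d₁ + β < d₂ →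
          (H c₂ - H c₁) / (c₂ - c₁ - β) ≤ (H d₂ - H d₁) / (d₂ - d₁ - β)) →
        c₁ = 0 ∧ c₂ = chat) := by
  -- H is strictly monotone on [0, ∞)
  have hHmono : StrictMonoOn H (Set.Ici 0) := by
    apply strictMonoOn_of_deriv_pos (convex_Ici 0) hHcont
    intro x hx
    rw [interior_Ici] at hx
    rw [(hHderiv x hx).deriv]
    exact hH'pos x hx
  -- produce a starting point x₁ for the IVT
  have hpack : ∃ x₁ : ℝ, β ≤ x₁ ∧ astar < x₁ ∧
      H' x₁ * (x₁ - β) - (H x₁ - H 0) ≤ 0 ∧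
      (β < x₁ ∨ H' x₁ * (x₁ - β) - (H x₁ - H 0) < 0) ∧
      (∀ x, 0 < x → x ≤ astar → H' x < H' x₁) := by
    rcases hcase with ⟨ha, hbm⟩ | ha0
    · obtain ⟨hz₀mem, hz₀eq⟩ := hz₀ ha
      have hz₀a : astar < z₀ := hz₀mem
      have hz₀0 : 0 < z₀ := ha.trans hz₀a
      have hH'0pos : 0 < H' 0 := hz₀eq ▸ hH'pos z₀ (Set.mem_Ioi.mpr hz₀0)
      -- for 0 < x < astar : H' x < H' 0
      have hup : ∀ x, 0 < x → x < astar → H' x < H' 0 := by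
        intro x hx0 hxa
        have h2 : H' (x/2) > H' x :=
          hH'dec ⟨by linarith, by linarith⟩ ⟨hx0, hxa⟩ (by linarith)
        have h1 : H' (x/2) ≤ H' 0 := by
          have hc : Filter.Tendsto H' (nhdsWithin 0 (Set.Ioi 0)) (nhds (H' 0)) :=
            (hH'cont 0 Set.self_mem_Ici).mono_left
              (nhdsWithin_mono _ Set.Ioi_subset_Ici_self)
          have hmem : Set.Ioo (0:ℝ) (x/2) ∈ nhdsWithin 0 (Set.Ioi (0:ℝ)) :=
            Ioo_mem_nhdsGT_of_mem (Set.mem_Ico.mpr ⟨le_rfl, by linarith⟩)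
          refine ge_of_tendsto hc ?_
          filter_upwards [hmem] with t ht
          obtain ⟨ht1, ht2⟩ := ht
          exact (hH'dec ⟨ht1, by linarith⟩ ⟨by linarith, by linarith⟩ ht2).le
        linarith
      -- H' astar < H' t for any t ≥ z₀
      have hA : ∀ t, z₀ ≤ t → H' astar < H' t := by
        intro t ht
        have hta : astar < t := hz₀a.trans_le ht
        have h1 : astar < (astar + t) / 2 := by linarith
        have h2 : (astar + t) / 2 < t := by linarith
        have h3 : H' astar ≤ H' ((astar + t) / 2) := by
          have hc : Filter.Tendsto H' (nhdsWithin astar (Set.Ioi astar)) (nhds (H' astar)) :=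
            (hH'cont astar (Set.mem_Ici.mpr ha.le)).mono_left
              (nhdsWithin_mono _ (fun u hu => le_of_lt (lt_of_le_of_lt ha.le hu)))
          have hmem : Set.Ioo astar ((astar + t) / 2) ∈ nhdsWithin astar (Set.Ioi astar) :=
            Ioo_mem_nhdsGT_of_mem (Set.mem_Ico.mpr ⟨le_rfl, h1⟩)
          refine le_of_tendsto hc ?_
          filter_upwards [hmem] with u hu
          exact (hH'inc hu.1 (Set.mem_Ioi.mpr h1) hu.2).le
        exact h3.trans_lt (hH'inc (Set.mem_Ioi.mpr h1) (Set.mem_Ioi.mpr hta) h2)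
      have hsmall : ∀ t, z₀ ≤ t → ∀ x, 0 < x → x ≤ astar → H' x < H' t := by
        intro t ht x hx0 hxa
        rcases eq_or_lt_of_le hxa with he | hl
        · rw [he]; exact hA t ht
        · have h5 : H' 0 ≤ H' t := hz₀eq.symm.le.trans
            (hH'inc.monotoneOn hz₀mem (Set.mem_Ioi.mpr (hz₀a.trans_le ht)) ht)
          exact (hup x hx0 hl).trans_le h5
      rcases le_or_gt z₀ β with hzb | hbz
      · have hb : H 0 < H β := hHmono Set.self_mem_Ici (Set.mem_Ici.mpr hβ.le) hβ
        refine ⟨β, le_rfl, hz₀a.trans_le hzb, ?_, Or.inr ?_, hsmall β hzb⟩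
        · rw [sub_self, mul_zero, zero_sub]; linarith
        · rw [sub_self, mul_zero, zero_sub]; linarith
      · refine ⟨z₀, hbz.le, hz₀a, ?_, Or.inl hbz, hsmall z₀ le_rfl⟩
        have h1 : z₀ - (H z₀ - H 0) / H' 0 ≤ β := hβmax ▸ hbm
        have h2 : z₀ - β ≤ (H z₀ - H 0) / H' 0 := by linarith
        have h3 : (z₀ - β) * H' 0 ≤ H z₀ - H 0 := (le_div_iff₀ hH'0pos).mp h2
        rw [hz₀eq]; linarith
    · have hb : H 0 < H β := hHmono Set.self_mem_Ici (Set.mem_Ici.mpr hβ.le) hβ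
      refine ⟨β, le_rfl, by rw [ha0]; exact hβ, ?_, Or.inr ?_, ?_⟩
      · rw [sub_self, mul_zero, zero_sub]; linarith
      · rw [sub_self, mul_zero, zero_sub]; linarith
      · intro x hx0 hxa; exfalso; rw [ha0] at hxa; linarith
  obtain ⟨x₁, hx₁β, hx₁a, hφx₁, hedge, hsmall⟩ := hpack
  have hx₁0 : 0 < x₁ := hβ.trans_le hx₁β
  -- find a point where φ is nonnegative
  have hC0 : 0 ≤ H (x₁ + 1) - H 0 := by
    have := hHmono Set.self_mem_Ici (Set.mem_Ici.mpr (by linarith : (0:ℝ) ≤ x₁ + 1))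
      (by linarith)
    linarith
  obtain ⟨y₂, hy₂1, hy₂2⟩ : ∃ y₂, (H (x₁ + 1) - H 0) + 1 ≤ H' y₂ ∧ x₁ + 2 ≤ y₂ :=
    ((hH'top.eventually_ge_atTop ((H (x₁ + 1) - H 0) + 1)).and
      (Filter.eventually_ge_atTop (x₁ + 2))).exists
  have hpy : x₁ + 1 < y₂ := by linarith
  obtain ⟨c, hc, hceq⟩ := exists_hasDerivAt_eq_slope H H' hpy
    (hHcont.mono (fun t ht => Set.mem_Ici.mpr (by linarith [ht.1] : (0:ℝ) ≤ t)))
    (fun x hx => hHderiv x (Set.mem_Ioi.mpr (by linarith [hx.1])))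
  have hslope : H' c * (y₂ - (x₁ + 1)) = H y₂ - H (x₁ + 1) := by
    rw [hceq]
    exact div_mul_cancel₀ _ (by linarith : y₂ - (x₁ + 1) ≠ 0)
  have hcy : H' c < H' y₂ :=
    hH'inc (Set.mem_Ioi.mpr (by linarith [hc.1] : astar < c))
      (Set.mem_Ioi.mpr (by linarith [hc.1, hc.2] : astar < y₂)) hc.2
  have hφy₂ : 0 ≤ H' y₂ * (y₂ - β) - (H y₂ - H 0) := by
    nlinarith [mul_le_mul_of_nonneg_right hcy.le
        (by linarith [hc.1, hc.2] : (0:ℝ) ≤ y₂ - (x₁ + 1)),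
      mul_le_mul_of_nonneg_right hy₂1 (by linarith : (0:ℝ) ≤ (x₁ + 1) - β),
      mul_nonneg hC0 (by linarith : (0:ℝ) ≤ (x₁ + 1) - β - 1)]
  -- IVT
  have hx₁y₂ : x₁ ≤ y₂ := by linarith
  have hφcont : ContinuousOn (fun x => H' x * (x - β) - (H x - H 0)) (Set.Icc x₁ y₂) := by
    have hsub : Set.Icc x₁ y₂ ⊆ Set.Ici 0 :=
      fun t ht => Set.mem_Ici.mpr (by linarith [ht.1])
    exact ((hH'cont.mono hsub).mul ((continuous_id.sub continuous_const).continuousOn)).sub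
      ((hHcont.mono hsub).sub continuousOn_const)
  obtain ⟨chat, hchatmem, hroot⟩ :=
    intermediate_value_Icc hx₁y₂ hφcont (Set.mem_Icc.mpr ⟨hφx₁, hφy₂⟩)
  have hroot' : H' chat * (chat - β) - (H chat - H 0) = 0 := hroot
  have hcx₁ : x₁ ≤ chat := hchatmem.1
  have hca : astar < chat := lt_of_lt_of_le hx₁a hcx₁
  have hcβ : β < chat := by
    rcases hedge with h | h
    · exact h.trans_le hcx₁
    · rcases eq_or_lt_of_le hcx₁ with he | hl
      · exfalso; rw [← he] at hroot'; linarith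
      · exact lt_of_le_of_lt hx₁β hl
  have hc0 : 0 < chat := hβ.trans hcβ
  have hm0 : 0 < H' chat := hH'pos chat (Set.mem_Ioi.mpr hc0)
  have heq : H chat - H 0 = H' chat * (chat - β) := by linarith
  have heq' : H chat - H 0 = H' chat * chat - H' chat * β := by rw [heq]; ring
  have h3 : ∀ x, 0 < x → x < chat → H' x < H' chat := by
    intro x hx0 hxc
    rcases le_or_gt x astar with hxa | hxa
    · exact (hsmall x hx0 hxa).trans_le
        (hH'inc.monotoneOn (Set.mem_Ioi.mpr hx₁a) (Set.mem_Ioi.mpr hca) hcx₁)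
    · exact hH'inc (Set.mem_Ioi.mpr hxa) (Set.mem_Ioi.mpr hca) hxc
  have h4 : ∀ x, chat < x → H' chat < H' x := fun x hx =>
    hH'inc (Set.mem_Ioi.mpr hca) (Set.mem_Ioi.mpr (hca.trans hx)) hx
  -- the function ψ x = H x - H' chat * x is strictly decreasing on [0, chat],
  -- strictly increasing on [chat, ∞)
  have hψanti : StrictAntiOn (fun x => H x - H' chat * x) (Set.Icc 0 chat) := by
    apply strictAntiOn_of_deriv_neg (convex_Icc 0 chat)
    · exact (hHcont.mono Set.Icc_subset_Ici_self).sub (continuousOn_const.mul continuousOn_id)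
    · intro x hx
      rw [interior_Icc] at hx
      have hd : HasDerivAt (fun y => H y - H' chat * y) (H' x - H' chat) x := by
        exact ((hHderiv x (Set.mem_Ioi.mpr hx.1)).sub ((hasDerivAt_id x).const_mul (H' chat))).congr_deriv (by ring)
      rw [hd.deriv]
      have := h3 x hx.1 hx.2
      linarith
  have hψmono : StrictMonoOn (fun x => H x - H' chat * x) (Set.Ici chat) := by
    apply strictMonoOn_of_deriv_pos (convex_Ici chat)
    · exact (hHcont.mono (Set.Ici_subset_Ici.mpr hc0.le)).sub
        (continuousOn_const.mul continuousOn_id)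
    · intro x hx
      rw [interior_Ici] at hx
      have hd : HasDerivAt (fun y => H y - H' chat * y) (H' x - H' chat) x := by
        exact ((hHderiv x (Set.mem_Ioi.mpr (hc0.trans hx))).sub
          ((hasDerivAt_id x).const_mul (H' chat))).congr_deriv (by ring)
      rw [hd.deriv]
      have := h4 x hx
      linarith
  have hψle : ∀ a b, 0 ≤ a → a ≤ b → b ≤ chat →
      H b - H' chat * b ≤ H a - H' chat * a := by
    intro a b ha hab hb
    exact hψanti.antitoneOn (Set.mem_Icc.mpr ⟨ha, hab.trans hb⟩)
      (Set.mem_Icc.mpr ⟨ha.trans hab, hb⟩) hab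
  have hψlt : ∀ a b, 0 ≤ a → a < b → b ≤ chat →
      H b - H' chat * b < H a - H' chat * a := by
    intro a b ha hab hb
    exact hψanti (Set.mem_Icc.mpr ⟨ha, hab.le.trans hb⟩)
      (Set.mem_Icc.mpr ⟨ha.trans hab.le, hb⟩) hab
  have hψle' : ∀ a b, chat ≤ a → a ≤ b → H a - H' chat * a ≤ H b - H' chat * b := by
    intro a b ha hab
    exact hψmono.monotoneOn (Set.mem_Ici.mpr ha) (Set.mem_Ici.mpr (ha.trans hab)) hab
  have hψlt' : ∀ a b, chat ≤ a → a < b → H a - H' chat * a < H b - H' chat * b := by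
    intro a b ha hab
    exact hψmono (Set.mem_Ici.mpr ha) (Set.mem_Ici.mpr (ha.trans hab.le)) hab
  have hψmin : ∀ d, 0 ≤ d → H chat - H' chat * chat ≤ H d - H' chat * d := by
    intro d hd
    rcases le_total d chat with h | h
    · exact hψle d chat hd h le_rfl
    · exact hψle' chat d le_rfl h
  have hg0chat : (H chat - H 0) / (chat - β) = H' chat := by
    rw [heq, mul_div_assoc, div_self (ne_of_gt (by linarith : (0:ℝ) < chat - β)), mul_one]
  -- the key global inequality
  have hkey : ∀ d₁ d₂, 0 ≤ d₁ → d₁ + β < d₂ →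
      H' chat * (d₂ - d₁ - β) ≤ H d₂ - H d₁ := by
    intro d₁ d₂ h1 h2
    have hd₂0 : 0 ≤ d₂ := by linarith
    have hexp : H' chat * (d₂ - d₁ - β)
        = (H' chat * d₂ - H' chat * d₁) - H' chat * β := by ring
    rcases le_or_gt d₁ chat with hc | hc
    · have e1 : H d₁ - H' chat * d₁ ≤ H 0 - H' chat * 0 := hψle 0 d₁ le_rfl h1 hc
      have e2 : H chat - H' chat * chat ≤ H d₂ - H' chat * d₂ := hψmin d₂ hd₂0
      rw [hexp]
      linarith
    · have e : H d₁ - H' chat * d₁ ≤ H d₂ - H' chat * d₂ :=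
        hψle' d₁ d₂ hc.le (by linarith)
      have := mul_pos hm0 hβ
      rw [hexp]
      linarith
  refine ⟨chat, max_lt hcβ hca, ?_, ⟨le_rfl, by linarith⟩, ?_, ?_⟩
  · -- strict minimality of g₀ at chat
    intro x hxβ hxne
    rw [hg₀, hg₀, hg0chat, lt_div_iff₀ (by linarith : (0:ℝ) < x - β)]
    have hψchat : H chat - H' chat * chat = H 0 - H' chat * β := by linarith
    have hexp : H' chat * (x - β) = H' chat * x - H' chat * β := by ring
    rcases lt_or_gt_of_ne hxne with h | h
    · have := hψlt x chat (by linarith) h le_rfl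
      rw [hexp]; linarith
    · have := hψlt' chat x le_rfl h
      rw [hexp]; linarith
  · -- global minimality over D
    intro d₁ d₂ h1 h2
    rw [sub_zero, hg0chat, le_div_iff₀ (by linarith : (0:ℝ) < d₂ - d₁ - β)]
    exact hkey d₁ d₂ h1 h2
  · -- uniqueness of the minimizer
    intro c₁ c₂ h1 h2 hmin
    have hup2 : (H c₂ - H c₁) / (c₂ - c₁ - β) ≤ H' chat := by
      have := hmin 0 chat le_rfl (by linarith)
      rwa [sub_zero, hg0chat] at this
    have hdown : H' chat ≤ (H c₂ - H c₁) / (c₂ - c₁ - β) := by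
      rw [le_div_iff₀ (by linarith : (0:ℝ) < c₂ - c₁ - β)]
      exact hkey c₁ c₂ h1 h2
    have heqg : H c₂ - H c₁ = H' chat * c₂ - H' chat * c₁ - H' chat * β := by
      have h := le_antisymm hup2 hdown
      rw [div_eq_iff (by linarith : c₂ - c₁ - β ≠ 0)] at h
      have : H c₂ - H c₁ = H' chat * (c₂ - c₁ - β) := by linarith
      rw [this]; ring
    have hψchat : H chat - H' chat * chat = H 0 - H' chat * β := by linarith
    rcases le_or_gt c₁ chat with hc | hc
    · have e1 : H c₁ - H' chat * c₁ ≤ H 0 - H' chat * 0 := hψle 0 c₁ le_rfl h1 hc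
      have e2 : H chat - H' chat * chat ≤ H c₂ - H' chat * c₂ := hψmin c₂ (by linarith)
      constructor
      · by_contra hne
        have hc₁0 : 0 < c₁ := lt_of_le_of_ne h1 (Ne.symm hne)
        have := hψlt 0 c₁ le_rfl hc₁0 hc
        linarith
      · by_contra hne
        rcases lt_or_gt_of_ne hne with h | h
        · have := hψlt c₂ chat (by linarith) h le_rfl
          linarith
        · have := hψlt' chat c₂ le_rfl h
          linarith
    · exfalso
      have := hψlt' c₁ c₂ hc.le (by linarith)
      have := mul_pos hm0 hβ
      linarith
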